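/- Let B be a commutative ring, σ(y) = y + ν an automorphism of A = B[y]/(y^p − y − b) for p = 3, ν ∈ {1,2} ⊂ F_3 ⊂ B, ε_i := y^i(id − σ). Then the hom-Lie brackets are: ⟨⟨ε_0,ε_1⟩⟩ = −ν·ε_0, ⟨⟨ε_0,ε_2⟩⟩ = −2ν·ε_1 − ν²·ε_0, ⟨⟨ε_1,ε_2⟩⟩ = −ν²·ε_1 − ν·ε_2. -/

import Mathlib

open Polynomial

/-- Artin–Schreier hom-Lie algebra for `p = 3`.  With
`A = B[y]/(y³ - y - b)` over an `𝔽₃`-algebra `B`, `σ(y) = y + ν` (`ν ∈ {1,2}`),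
`Δ = id - σ` and `ε_i = y^i·Δ`, the brackets
`⟨⟨ε_i,ε_j⟩⟩ = (σ(y^i)Δ(y^j) - σ(y^j)Δ(y^i))·Δ` are
`⟨⟨ε_0,ε_1⟩⟩ = -ν ε_0`, `⟨⟨ε_0,ε_2⟩⟩ = -2ν ε_1 - ν² ε_0`,
`⟨⟨ε_1,ε_2⟩⟩ = -ν² ε_1 - ν ε_2`. -/
theorem artin_schreier_p3_brackets
    {B : Type*} [CommRing B] [Algebra (ZMod 3) B] (b ν : B)
    (hν : ν = 1 ∨ ν = 2)
    (σ : AdjoinRoot (X ^ 3 - X - C b) →ₐ[B] AdjoinRoot (X ^ 3 - X - C b))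
    (hσ : σ (AdjoinRoot.root (X ^ 3 - X - C b)) =
      AdjoinRoot.root (X ^ 3 - X - C b) + algebraMap B _ ν) :
    (let y := AdjoinRoot.root (X ^ 3 - X - C b)
     let ν' := algebraMap B (AdjoinRoot (X ^ 3 - X - C b)) ν
     (σ (y ^ 0) * (y ^ 1 - σ (y ^ 1)) - σ (y ^ 1) * (y ^ 0 - σ (y ^ 0)) = -ν') ∧
     (σ (y ^ 0) * (y ^ 2 - σ (y ^ 2)) - σ (y ^ 2) * (y ^ 0 - σ (y ^ 0)) =
        -(2 * ν') * y - ν' ^ 2) ∧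
     (σ (y ^ 1) * (y ^ 2 - σ (y ^ 2)) - σ (y ^ 2) * (y ^ 1 - σ (y ^ 1)) =
        -ν' ^ 2 * y - ν' * y ^ 2)) := by
  intro y ν'
  simp only [pow_zero, pow_one, pow_two, map_one, map_mul, y, ν', hσ]
  refine ⟨by ring, by ring, by ring⟩
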